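/- Let (ζ_i)_{i∈ℕ} be an independent family of real-valued random variables with E[ζ_i] = 0 and |ζ_i| ≤ K almost surely for some constant K, and let (x_i)_{i∈ℕ} be an i.i.d. family of {0,1}-valued random variables with P(x_i = 1) = p > 0, such that the family (x_i)_i is independent of the family (ζ_i)_i. Let c ∈ ℝ. For each n, let N¹_n = { i ≤ n : x_i = 1 }, and define ρ_n = (1/|N¹_n|)·Σ_{i ∈ N¹_n} ζ_i if N¹_n is nonempty and ρ_n = c otherwise. Then ρ_n → 0 almost surely as n → ∞. -/

import Mathlib

open MeasureTheory ProbabilityTheory Filter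
open Topology

set_option maxHeartbeats 1000000 in
lemma slln_bounded {Ω : Type*} [MeasurableSpace Ω] (P : Measure Ω) [IsProbabilityMeasure P]
    (Y : ℕ → Ω → ℝ) (K : ℝ) (hK : 0 ≤ K)
    (hmeas : ∀ i, Measurable (Y i))
    (hbdd : ∀ i, ∀ᵐ ω ∂P, |Y i ω| ≤ K)
    (hvar : ∀ n : ℕ, ∫ ω, (∑ i ∈ Finset.range n, Y i ω) ^ 2 ∂P ≤ n * K ^ 2) :
    ∀ᵐ ω ∂P, Tendsto (fun n : ℕ => (∑ i ∈ Finset.range n, Y i ω) / n) atTop (𝓝 0) := by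
  set S : ℕ → Ω → ℝ := fun n ω => ∑ i ∈ Finset.range n, Y i ω with hS
  -- integrability of squares
  have hSmeas : ∀ n, Measurable (S n) := fun n => Finset.measurable_sum _ fun i _ => hmeas i
  have hball : ∀ᵐ ω ∂P, ∀ i, |Y i ω| ≤ K := ae_all_iff.mpr hbdd
  have hSbdd : ∀ n : ℕ, ∀ᵐ ω ∂P, |S n ω| ≤ n * K := by
    intro n
    filter_upwards [hball] with ω hω
    calc |S n ω| ≤ ∑ i ∈ Finset.range n, |Y i ω| := Finset.abs_sum_le_sum_abs _ _
      _ ≤ ∑ _i ∈ Finset.range n, K := Finset.sum_le_sum fun i _ => hω i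
      _ = n * K := by simp [mul_comm]
  have hSint : ∀ n : ℕ, Integrable (fun ω => (S n ω) ^ 2) P := by
    intro n
    refine (integrable_const ((n * K) ^ 2)).mono' ((hSmeas n).pow_const 2).aestronglyMeasurable ?_
    filter_upwards [hSbdd n] with ω hω
    have h0 : (0:ℝ) ≤ n * K := by positivity
    calc ‖S n ω ^ 2‖ = |S n ω| ^ 2 := by rw [Real.norm_eq_abs, abs_pow]
      _ ≤ (n * K) ^ 2 := by nlinarith [abs_nonneg (S n ω)]
  -- Borel-Cantelli along squares, for each accuracy 1/(k+1)
  have hBC : ∀ k : ℕ, ∀ᵐ ω ∂P, ∀ᶠ m : ℕ in atTop,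
      |S ((m+1) * (m+1)) ω| < (1 / (k+1 : ℝ)) * ((m+1) * (m+1) : ℕ) := by
    intro k
    set δ : ℝ := 1 / (k+1 : ℝ) with hδ
    have hδpos : 0 < δ := by positivity
    set s : ℕ → Set Ω := fun m =>
      {ω | (δ * ((m+1) * (m+1) : ℕ)) ^ 2 ≤ (S ((m+1) * (m+1)) ω) ^ 2} with hs
    have hmeasbound : ∀ m : ℕ, (P (s m)).toReal ≤ (K ^ 2 / δ ^ 2) / ((m+1 : ℝ) ^ 2) := by
      intro m
      have hε : (0:ℝ) < (δ * ((m+1) * (m+1) : ℕ)) ^ 2 := by positivity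
      have hmarkov := mul_meas_ge_le_integral_of_nonneg
        (μ := P) (f := fun ω => (S ((m+1) * (m+1)) ω) ^ 2)
        (ae_of_all _ fun ω => sq_nonneg _) (hSint _) ((δ * ((m+1) * (m+1) : ℕ)) ^ 2)
      have h2 := le_trans hmarkov (hvar ((m+1) * (m+1)))
      rw [← le_div_iff₀' hε] at h2
      refine le_trans h2 (le_of_eq ?_)
      push_cast
      field_simp
    have hsum : (∑' m, P (s m)) ≠ ⊤ := by
      have hsummable : Summable (fun m : ℕ => (K ^ 2 / δ ^ 2) / ((m+1 : ℝ) ^ 2)) := by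
        have h1 : Summable (fun m : ℕ => 1 / ((m+1 : ℝ) ^ 2)) := by
          have := (summable_nat_add_iff (f := fun n : ℕ => 1 / (n : ℝ) ^ 2) 1).mpr
            (Real.summable_one_div_nat_pow.mpr one_lt_two)
          simpa using this
        exact (h1.mul_left (K ^ 2 / δ ^ 2)).congr fun m => by ring
      have hle : (∑' m, P (s m)) ≤ ∑' m : ℕ, ENNReal.ofReal ((K ^ 2 / δ ^ 2) / (((m : ℝ)+1) ^ 2)) := by
        refine ENNReal.tsum_le_tsum fun m => ?_
        rw [← ENNReal.ofReal_toReal (measure_ne_top P (s m))]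
        exact ENNReal.ofReal_le_ofReal (hmeasbound m)
      rw [← ENNReal.ofReal_tsum_of_nonneg (fun m => by positivity) hsummable] at hle
      exact ne_top_of_le_ne_top ENNReal.ofReal_ne_top hle
    filter_upwards [ae_eventually_notMem hsum] with ω hω
    filter_upwards [hω] with m hm
    simp only [hs, Set.mem_setOf_eq, not_le] at hm
    have hb : (0:ℝ) ≤ δ * ((m+1) * (m+1) : ℕ) := by positivity
    have := lt_of_pow_lt_pow_left₀ 2 hb (by rw [sq_abs]; exact hm)
    exact this
  have hTsub : ∀ᵐ ω ∂P, Tendsto (fun m : ℕ => S ((m+1) * (m+1)) ω / (((m+1) * (m+1) : ℕ) : ℝ))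
      atTop (𝓝 0) := by
    filter_upwards [ae_all_iff.mpr hBC] with ω hω
    rw [Metric.tendsto_atTop]
    intro ε hε
    obtain ⟨k, hk⟩ := exists_nat_one_div_lt hε
    obtain ⟨N, hN⟩ := (hω k).exists_forall_of_atTop
    refine ⟨N, fun m hm => ?_⟩
    have h1 := hN m hm
    have hpos : (0:ℝ) < (((m+1) * (m+1) : ℕ) : ℝ) := by positivity
    rw [Real.dist_eq, sub_zero, abs_div, abs_of_pos hpos, div_lt_iff₀ hpos]
    calc |S ((m+1) * (m+1)) ω| < (1 / (k+1 : ℝ)) * (((m+1) * (m+1) : ℕ) : ℝ) := h1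
      _ ≤ ε * (((m+1) * (m+1) : ℕ) : ℝ) := by
          apply mul_le_mul_of_nonneg_right (le_of_lt ?_) (le_of_lt hpos)
          exact_mod_cast hk
  -- interpolation
  filter_upwards [hTsub, hball] with ω hT hb
  have hT' : Tendsto (fun r : ℕ => S (r * r) ω / ((r * r : ℕ) : ℝ)) atTop (𝓝 0) :=
    (tendsto_add_atTop_iff_nat 1).mp hT
  have hsqrt : Tendsto Nat.sqrt atTop atTop :=
    tendsto_atTop_atTop.mpr fun b => ⟨b * b, fun a ha => Nat.le_sqrt.mpr ha⟩
  have hg : Tendsto (fun n : ℕ =>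
      |S (Nat.sqrt n * Nat.sqrt n) ω / ((Nat.sqrt n * Nat.sqrt n : ℕ) : ℝ)|
        + 2 * K / (Nat.sqrt n : ℝ)) atTop (𝓝 0) := by
    have h1 : Tendsto (fun r : ℕ => |S (r * r) ω / ((r * r : ℕ) : ℝ)|) atTop (𝓝 0) := by
      simpa using hT'.abs
    have h2 := (tendsto_const_div_atTop_nhds_zero_nat (2 * K))
    have := (h1.comp hsqrt).add (h2.comp hsqrt)
    simpa using this
  refine squeeze_zero_norm' ?_ hg
  filter_upwards [eventually_ge_atTop 1] with n hn
  set r := Nat.sqrt n with hr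
  have hr1 : 1 ≤ r := Nat.le_sqrt.mpr (by omega)
  have hr2 : r * r ≤ n := by simpa [pow_two] using Nat.sqrt_le' n
  have hr3 : n < r * r + 2 * r + 1 := by
    have := Nat.lt_succ_sqrt' n
    have e : (Nat.succ r) ^ 2 = r * r + 2 * r + 1 := by rw [Nat.succ_eq_add_one]; ring
    rw [e] at this; exact this
  have hcard : ((n - r * r : ℕ) : ℝ) ≤ 2 * r := by
    have : n - r * r ≤ 2 * r := Nat.sub_le_iff_le_add.mpr (by linarith)
    calc ((n - r * r : ℕ) : ℝ) ≤ ((2 * r : ℕ) : ℝ) := by exact_mod_cast this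
      _ = 2 * r := by push_cast; ring
  have hdiff : |S n ω - S (r * r) ω| ≤ K * ((n - r * r : ℕ) : ℝ) := by
    have heq : S n ω - S (r * r) ω = ∑ i ∈ Finset.Ico (r * r) n, Y i ω := by
      rw [hS]
      rw [Finset.sum_Ico_eq_sub _ hr2]
    rw [heq]
    calc |∑ i ∈ Finset.Ico (r * r) n, Y i ω| ≤ ∑ i ∈ Finset.Ico (r * r) n, |Y i ω| :=
          Finset.abs_sum_le_sum_abs _ _
      _ ≤ ∑ _i ∈ Finset.Ico (r * r) n, K := Finset.sum_le_sum fun i _ => hb i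
      _ = ((n - r * r : ℕ) : ℝ) * K := by simp [Nat.card_Ico]
      _ = K * ((n - r * r : ℕ) : ℝ) := mul_comm _ _
  have hrpos : (0:ℝ) < r := by exact_mod_cast hr1
  have hrrpos : (0:ℝ) < ((r * r : ℕ) : ℝ) := by positivity
  have hnpos : (0:ℝ) < (n : ℝ) := by exact_mod_cast hn
  have hSn : |S n ω| ≤ |S (r * r) ω| + 2 * K * r := by
    have h1 : |S n ω| ≤ |S (r * r) ω| + |S n ω - S (r * r) ω| := by
      have := abs_add_le (S (r * r) ω) (S n ω - S (r * r) ω)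
      simpa using this
    have h2 : K * ((n - r * r : ℕ) : ℝ) ≤ K * (2 * r) :=
      mul_le_mul_of_nonneg_left hcard hK
    nlinarith [hdiff]
  have hmain : |S n ω / n| ≤ (|S (r * r) ω| + 2 * K * r) / ((r * r : ℕ) : ℝ) := by
    rw [abs_div, abs_of_pos hnpos]
    apply div_le_div₀ (by positivity) hSn hrrpos
    exact_mod_cast hr2
  rw [Real.norm_eq_abs]
  refine hmain.trans (le_of_eq ?_)
  rw [abs_div, abs_of_pos hrrpos, add_div]
  congr 1
  push_cast
  field_simp


set_option maxHeartbeats 1000000 in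
/-- Lemma B.1 of the paper: a strong law of large numbers over randomly selected
subpopulations. If `(ζ_i)` are independent, mean-zero, uniformly bounded random
variables, and `(x_i)` are i.i.d. `{0,1}`-valued indicators with success
probability `p > 0`, the family `(x_i)` independent of `(ζ_i)`, then the average
of the `ζ_i` over the random subset `N¹_n = {i ≤ n : x_i = 1}` (set to a default
constant `c` when the subset is empty) converges to `0` almost surely. -/
theorem slln_random_subset
    {Ω : Type*} [MeasurableSpace Ω] (P : Measure Ω) [IsProbabilityMeasure P]
    (ζ : ℕ → Ω → ℝ) (x : ℕ → Ω → ℝ) (K : ℝ) (p : ℝ) (c : ℝ)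
    (hζmeas : ∀ i, Measurable (ζ i))
    (hζindep : iIndepFun ζ P)
    (hζmean : ∀ i, ∫ ω, ζ i ω ∂P = 0)
    (hζbdd : ∀ i, ∀ᵐ ω ∂P, |ζ i ω| ≤ K)
    (hxmeas : ∀ i, Measurable (x i))
    (hx01 : ∀ i ω, x i ω = 0 ∨ x i ω = 1)
    (hxindep : iIndepFun x P)
    (hxident : ∀ i, P.map (x i) = P.map (x 0))
    (hp : 0 < p)
    (hxp : ∀ i, (P {ω | x i ω = 1}).toReal = p)
    (hfamindep : Indep (⨆ i, MeasurableSpace.comap (x i) inferInstance)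
                       (⨆ i, MeasurableSpace.comap (ζ i) inferInstance) P) :
    ∀ᵐ ω ∂P, Tendsto
      (fun n : ℕ =>
        let N := (Finset.range n).filter (fun i => x i ω = 1)
        if N.Nonempty then (N.card : ℝ)⁻¹ * ∑ i ∈ N, ζ i ω else c)
      atTop (nhds 0) := by
  have hPne : (P : Measure Ω) ≠ 0 := IsProbabilityMeasure.ne_zero P
  have hne : (MeasureTheory.ae P).NeBot := ae_neBot.mpr hPne
  obtain ⟨ω₀, hω₀⟩ := (hζbdd 0).exists
  have hK : 0 ≤ K := le_trans (abs_nonneg _) hω₀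
  set Y : ℕ → Ω → ℝ := fun i ω => x i ω * ζ i ω with hY
  have hYmeas : ∀ i, Measurable (Y i) := fun i => (hxmeas i).mul (hζmeas i)
  have hxabs : ∀ i ω, |x i ω| ≤ 1 := by
    intro i ω; rcases hx01 i ω with h | h <;> simp [h]
  have hYbdd : ∀ i, ∀ᵐ ω ∂P, |Y i ω| ≤ K := by
    intro i; filter_upwards [hζbdd i] with ω hω
    calc |Y i ω| = |x i ω| * |ζ i ω| := abs_mul _ _
      _ ≤ 1 * K := mul_le_mul (hxabs i ω) hω (abs_nonneg _) zero_le_one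
      _ = K := one_mul K
  have hζint : ∀ i, Integrable (ζ i) P := by
    intro i
    refine (integrable_const K).mono' (hζmeas i).aestronglyMeasurable ?_
    filter_upwards [hζbdd i] with ω h using by rwa [Real.norm_eq_abs]
  have hxM : ∀ i, Measurable[⨆ j, MeasurableSpace.comap (x j) inferInstance] (x i) := fun i =>
    Measurable.of_comap_le (le_iSup (fun j => MeasurableSpace.comap (x j) inferInstance) i)
  have hζMm : ∀ i, Measurable[⨆ j, MeasurableSpace.comap (ζ j) inferInstance] (ζ i) := fun i =>
    Measurable.of_comap_le (le_iSup (fun j => MeasurableSpace.comap (ζ j) inferInstance) i)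
  have hIXZ : ∀ (f g : Ω → ℝ),
      Measurable[⨆ i, MeasurableSpace.comap (x i) inferInstance] f →
      Measurable[⨆ i, MeasurableSpace.comap (ζ i) inferInstance] g →
      IndepFun f g P := fun f g hf hg =>
    indep_of_indep_of_le_right (indep_of_indep_of_le_left hfamindep hf.comap_le) hg.comap_le
  -- off-diagonal terms vanish
  have hoff : ∀ i j : ℕ, i ≠ j → ∫ ω, Y i ω * Y j ω ∂P = 0 := by
    intro i j hij
    have h1 : (fun ω => Y i ω * Y j ω) = (fun ω => x i ω * x j ω) * (fun ω => ζ i ω * ζ j ω) := by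
      funext ω; simp only [hY, Pi.mul_apply]; ring
    have hind : IndepFun (fun ω => x i ω * x j ω) (fun ω => ζ i ω * ζ j ω) P :=
      hIXZ _ _ ((hxM i).mul (hxM j)) ((hζMm i).mul (hζMm j))
    have hxxint : Integrable (fun ω => x i ω * x j ω) P := by
      refine (integrable_const 1).mono' ((hxmeas i).mul (hxmeas j)).aestronglyMeasurable ?_
      refine ae_of_all _ fun ω => ?_
      rw [Real.norm_eq_abs, abs_mul]
      calc |x i ω| * |x j ω| ≤ 1 * 1 :=
            mul_le_mul (hxabs i ω) (hxabs j ω) (abs_nonneg _) zero_le_one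
        _ = 1 := one_mul 1
    have hzzint : Integrable (fun ω => ζ i ω * ζ j ω) P := by
      refine (integrable_const (K ^ 2)).mono'
        ((hζmeas i).mul (hζmeas j)).aestronglyMeasurable ?_
      filter_upwards [hζbdd i, hζbdd j] with ω h1 h2
      rw [Real.norm_eq_abs, abs_mul]
      calc |ζ i ω| * |ζ j ω| ≤ K * K := mul_le_mul h1 h2 (abs_nonneg _) hK
        _ = K ^ 2 := (sq K).symm
    have hzz : ∫ ω, ζ i ω * ζ j ω ∂P = (∫ ω, ζ i ω ∂P) * ∫ ω, ζ j ω ∂P :=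
      (hζindep.indepFun hij).integral_fun_mul_eq_mul_integral (hζint i).aestronglyMeasurable (hζint j).aestronglyMeasurable
    have h2 : ∫ ω, (x i ω * x j ω) * (ζ i ω * ζ j ω) ∂P
        = (∫ ω, x i ω * x j ω ∂P) * ∫ ω, ζ i ω * ζ j ω ∂P :=
      hind.integral_fun_mul_eq_mul_integral hxxint.aestronglyMeasurable hzzint.aestronglyMeasurable
    calc ∫ ω, Y i ω * Y j ω ∂P = ∫ ω, (x i ω * x j ω) * (ζ i ω * ζ j ω) ∂P := by
          apply integral_congr_ae; refine ae_of_all _ fun ω => ?_; simp only [hY]; ring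
      _ = (∫ ω, x i ω * x j ω ∂P) * ∫ ω, ζ i ω * ζ j ω ∂P := h2
      _ = 0 := by rw [hzz, hζmean i, zero_mul, mul_zero]
  -- variance bound
  have hprodint : ∀ i j : ℕ, Integrable (fun ω => Y i ω * Y j ω) P := by
    intro i j
    refine (integrable_const (K ^ 2)).mono' ((hYmeas i).mul (hYmeas j)).aestronglyMeasurable ?_
    filter_upwards [hYbdd i, hYbdd j] with ω h1 h2
    rw [Real.norm_eq_abs, abs_mul]
    calc |Y i ω| * |Y j ω| ≤ K * K := mul_le_mul h1 h2 (abs_nonneg _) hK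
      _ = K ^ 2 := (sq K).symm
  have hvar : ∀ n : ℕ, ∫ ω, (∑ i ∈ Finset.range n, Y i ω) ^ 2 ∂P ≤ n * K ^ 2 := by
    intro n
    have hexp : (fun ω => (∑ i ∈ Finset.range n, Y i ω) ^ 2)
        = fun ω => ∑ i ∈ Finset.range n, ∑ j ∈ Finset.range n, Y i ω * Y j ω := by
      funext ω; rw [sq, Finset.sum_mul_sum]
    rw [hexp, integral_finset_sum _ (fun i _ => integrable_finset_sum _ fun j _ => hprodint i j)]
    have hterm : ∀ i ∈ Finset.range n,
        (∫ ω, ∑ j ∈ Finset.range n, Y i ω * Y j ω ∂P) ≤ K ^ 2 := by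
      intro i hi
      rw [integral_finset_sum _ fun j _ => hprodint i j,
        Finset.sum_eq_single_of_mem i hi fun j _ hj => hoff i j fun h => hj h.symm]
      have hb : ∀ᵐ ω ∂P, Y i ω * Y i ω ≤ K ^ 2 := by
        filter_upwards [hYbdd i] with ω h
        have h2 := abs_le.mp h
        nlinarith
      calc (∫ ω, Y i ω * Y i ω ∂P) ≤ ∫ _ω, K ^ 2 ∂P :=
            integral_mono_ae (hprodint i i) (integrable_const _) hb
        _ = K ^ 2 := by simp
    calc (∑ i ∈ Finset.range n, ∫ ω, ∑ j ∈ Finset.range n, Y i ω * Y j ω ∂P)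
        ≤ ∑ _i ∈ Finset.range n, K ^ 2 := Finset.sum_le_sum hterm
      _ = n * K ^ 2 := by simp [mul_comm]
  -- SLLN for x
  have hxint : Integrable (x 0) P := by
    refine (integrable_const 1).mono' (hxmeas 0).aestronglyMeasurable ?_
    exact ae_of_all _ fun ω => by rw [Real.norm_eq_abs]; exact hxabs 0 ω
  have hxident' : ∀ i, IdentDistrib (x i) (x 0) P P := fun i =>
    ⟨(hxmeas i).aemeasurable, (hxmeas 0).aemeasurable, hxident i⟩
  have hxpair : Pairwise (Function.onFun (IndepFun · · P) x) := fun i j hij => hxindep.indepFun hij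
  have hx0mean : ∫ ω, x 0 ω ∂P = p := by
    have hset : MeasurableSet {ω | x 0 ω = 1} := hxmeas 0 (measurableSet_singleton 1)
    have hxindic : (fun ω => x 0 ω) = Set.indicator {ω | x 0 ω = 1} (fun _ => (1 : ℝ)) := by
      funext ω
      by_cases h : x 0 ω = 1
      · simp [Set.indicator_apply, Set.mem_setOf_eq, h]
      · have h0 : x 0 ω = 0 := (hx01 0 ω).resolve_right h
        simp [Set.indicator_apply, Set.mem_setOf_eq, h, h0]
    calc (∫ ω, x 0 ω ∂P) = ∫ ω, Set.indicator {ω | x 0 ω = 1} (fun _ => (1 : ℝ)) ω ∂P := by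
          rw [← hxindic]
      _ = (P {ω | x 0 ω = 1}).toReal • (1 : ℝ) := integral_indicator_const _ hset
      _ = p := by rw [hxp 0, smul_eq_mul, mul_one]
  have hA := strong_law_ae_real x hxint hxpair hxident'
  have hB := slln_bounded P Y K hK hYmeas hYbdd hvar
  filter_upwards [hA, hB] with ω hAω hBω
  rw [show ∫ ω, x 0 ω ∂P = p from hx0mean] at hAω
  set A : ℕ → ℝ := fun n => ∑ i ∈ Finset.range n, x i ω with hAdef
  set B : ℕ → ℝ := fun n => ∑ i ∈ Finset.range n, Y i ω with hBdef
  have key1 : ∀ n : ℕ, (((Finset.range n).filter (fun i => x i ω = 1)).card : ℝ) = A n := by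
    intro n
    have h1 : ∀ i ∈ Finset.range n, x i ω = if x i ω = 1 then (1 : ℝ) else 0 := by
      intro i _; rcases hx01 i ω with h | h <;> simp [h]
    rw [hAdef]
    simp only []
    rw [Finset.sum_congr rfl h1, Finset.sum_boole]
  have key2 : ∀ n : ℕ,
      (∑ i ∈ (Finset.range n).filter (fun i => x i ω = 1), ζ i ω) = B n := by
    intro n
    rw [hBdef]
    simp only []
    rw [Finset.sum_filter]
    refine Finset.sum_congr rfl fun i _ => ?_
    rcases hx01 i ω with h | h <;> simp [hY, h]
  have hlim : Tendsto (fun n : ℕ => (B n / n) / (A n / n)) atTop (𝓝 0) := by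
    have := hBω.div hAω (ne_of_gt hp)
    simpa [Pi.div_def] using this
  refine Tendsto.congr' ?_ hlim
  filter_upwards [hAω.eventually_const_lt (half_lt_self hp), eventually_ge_atTop 1]
    with n hn1 hn2
  have hnpos : (0 : ℝ) < n := by exact_mod_cast hn2
  have hApos : 0 < A n := by
    by_contra h
    push_neg at h
    have h2 : A n / n ≤ 0 := div_nonpos_of_nonpos_of_nonneg h (le_of_lt hnpos)
    have h3 : 0 < p / 2 := half_pos hp
    linarith
  have hNne : ((Finset.range n).filter (fun i => x i ω = 1)).Nonempty := by
    rw [← Finset.card_pos]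
    have h1 : (0 : ℝ) < (((Finset.range n).filter (fun i => x i ω = 1)).card : ℝ) := by
      rw [key1 n]; exact hApos
    exact_mod_cast h1
  show (B n / n) / (A n / n)
      = if ((Finset.range n).filter (fun i => x i ω = 1)).Nonempty
        then ((((Finset.range n).filter (fun i => x i ω = 1)).card : ℝ))⁻¹
          * ∑ i ∈ (Finset.range n).filter (fun i => x i ω = 1), ζ i ω
        else c
  rw [if_pos hNne, key1 n, key2 n, div_div_div_comm, div_self (ne_of_gt hnpos), div_one,
    inv_mul_eq_div]
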